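/- Trigonometric case of the functional equation (\ref{Calogero}) used to prove Theorem 2.1: for all complex numbers x, y, z with sinh x ≠ 0, sinh y ≠ 0, sinh(x+y) ≠ 0 and sinh z ≠ 0, one has (−1/sinh²x)·(coth y − coth z) + (1/sinh²y)·(coth x − coth z) = (1/sinh²y − 1/sinh²x)·(coth(x+y) − coth z), where coth u = cosh u / sinh u. -/

import Mathlib

open Complex

/-- Trigonometric case of the functional equation
`Φ'(x,z)Φ(y,z) − Φ(x,z)Φ'(y,z) = (V(y) − V(x))Φ(x+y,z)`
with `V(x) = 1/sinh²x` and `Φ(x,z) = coth x − coth z`. -/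
theorem trigonometric_functional_equation (x y z : ℂ)
    (hx : Complex.sinh x ≠ 0) (hy : Complex.sinh y ≠ 0)
    (hxy : Complex.sinh (x + y) ≠ 0) (hz : Complex.sinh z ≠ 0) :
    (-(1 / Complex.sinh x ^ 2)) * (Complex.cosh y / Complex.sinh y - Complex.cosh z / Complex.sinh z)
      + (1 / Complex.sinh y ^ 2) * (Complex.cosh x / Complex.sinh x - Complex.cosh z / Complex.sinh z)
      = (1 / Complex.sinh y ^ 2 - 1 / Complex.sinh x ^ 2)
          * (Complex.cosh (x + y) / Complex.sinh (x + y) - Complex.cosh z / Complex.sinh z) := by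
  have hc := Complex.cosh_sq_sub_sinh_sq x
  have hc' := Complex.cosh_sq_sub_sinh_sq y
  rw [Complex.sinh_add, Complex.cosh_add] at *
  have hxy2 : sinh x * cosh y + sinh y * cosh x ≠ 0 := by rw [mul_comm (sinh y)]; exact hxy
  field_simp
  linear_combination (sinh z * sinh x * sinh y) * hc - (sinh z * sinh x * sinh y) * hc'
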